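/- Fix N ≥ 1, real numbers d_i > 0 (i = 1, …, N), c > 0, and set λ_{1i} = (−c + √(c² + 4βd_i))/(2d_i) and λ_{2i} = (c + √(c² + 4βd_i))/(2d_i). Let k ∈ ℝ^N with k ≫ 0, let f : [0, k] → ℝ^N be continuously differentiable with ∂_j f_i(u) ≥ 0 for all u ∈ [0, k] and all i ≠ j, and let β > max{|∂_i f_i(u)| : u ∈ [0, k], i = 1, …, N}. For continuous u : ℝ → [0, k] define T_i[u](ξ) = (1/(d_i(λ_{1i} + λ_{2i}))) (∫_{−∞}^{ξ} e^{−λ_{1i}(ξ−s)} (βu_i(s) + f_i(u(s))) ds + ∫_{ξ}^{∞} e^{λ_{2i}(ξ−s)} (βu_i(s) + f_i(u(s))) ds). Then: (a) if u, v : ℝ → [0, k] are continuous with u(ξ) ≥ v(ξ) componentwise for all ξ, then T_i[u](ξ) ≥ T_i[v](ξ) for all ξ and all i; (b) if u : ℝ → [0, k] is continuous and each component u_i is nondecreasing on ℝ, then each T_i[u] is nondecreasing on ℝ. -/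

import Mathlib

open MeasureTheory

section Aux

open Set Real

/-- integrability of `exp (a*s)` on `Iic ξ` for `a > 0`. -/
lemma expIic_aux {a : ℝ} (ha : 0 < a) (ξ : ℝ) :
    IntegrableOn (fun s => Real.exp (a * s)) (Set.Iic ξ) := by
  have h : Integrable ((Set.Iic (a * ξ)).indicator Real.exp) :=
    (integrable_indicator_iff measurableSet_Iic).2 (integrableOn_exp_Iic (a * ξ))
  have h2 : Integrable fun x => ((Set.Iic (a * ξ)).indicator Real.exp) (a * x) :=
    h.comp_mul_left' ha.ne'
  have heq : (fun x => ((Set.Iic (a * ξ)).indicator Real.exp) (a * x))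
      = (Set.Iic ξ).indicator (fun s => Real.exp (a * s)) := by
    funext s
    by_cases hs : s ≤ ξ
    · have h1 : a * s ≤ a * ξ := mul_le_mul_of_nonneg_left hs ha.le
      simp [Set.indicator_apply, Set.mem_Iic, hs, h1]
    · have h1 : ¬ a * s ≤ a * ξ := by rw [mul_le_mul_iff_right₀ ha]; exact hs
      simp [Set.indicator_apply, Set.mem_Iic, hs, h1]
  rw [heq] at h2
  exact (integrable_indicator_iff measurableSet_Iic).1 h2

/-- integrability of `exp (-(a*s))` on `Ici ξ` for `a > 0`. -/
lemma expIci_aux {a : ℝ} (ha : 0 < a) (ξ : ℝ) :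
    IntegrableOn (fun s => Real.exp (-(a * s))) (Set.Ici ξ) := by
  rw [integrableOn_Ici_iff_integrableOn_Ioi]
  simpa [neg_mul] using exp_neg_integrableOn_Ioi ξ ha

/-- translation for integrals over `Iic`. -/
lemma shiftIic (F : ℝ → ℝ) (δ ξ : ℝ) :
    (∫ s in Set.Iic ξ, F s) = ∫ s in Set.Iic (ξ - δ), F (s + δ) := by
  have h := (measurePreserving_add_right volume δ).setIntegral_preimage_emb
    (Homeomorph.addRight δ).measurableEmbedding F (Set.Iic ξ)
  rw [← h]
  congr 1
  ext s
  simp [le_sub_iff_add_le]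

/-- translation for integrals over `Ici`. -/
lemma shiftIci (F : ℝ → ℝ) (δ ξ : ℝ) :
    (∫ s in Set.Ici ξ, F s) = ∫ s in Set.Ici (ξ - δ), F (s + δ) := by
  have h := (measurePreserving_add_right volume δ).setIntegral_preimage_emb
    (Homeomorph.addRight δ).measurableEmbedding F (Set.Ici ξ)
  rw [← h]
  congr 1
  ext s
  simp [sub_le_iff_le_add]

/-- The key pointwise monotonicity: `w ↦ β wᵢ + fᵢ(w)` is nondecreasing on the box. -/
lemma key_mono {N : ℕ} {k : Fin N → ℝ} (hk : ∀ i, 0 < k i) {β : ℝ}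
    {f : (Fin N → ℝ) → (Fin N → ℝ)} (hf : ContDiffOn ℝ 1 f (Set.Icc 0 k))
    (hcoop : ∀ u ∈ Set.Icc (0 : Fin N → ℝ) k, ∀ i j, i ≠ j →
      0 ≤ fderiv ℝ f u (Pi.single j 1) i)
    (hβ : ∀ u ∈ Set.Icc (0 : Fin N → ℝ) k, ∀ i,
      |fderiv ℝ f u (Pi.single i 1) i| < β)
    (i : Fin N) {x y : Fin N → ℝ} (hx : x ∈ Set.Icc 0 k) (hy : y ∈ Set.Icc 0 k)
    (hxy : x ≤ y) : β * x i + f x i ≤ β * y i + f y i := by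
  have hco : Convex ℝ (Set.Icc (0 : Fin N → ℝ) k) := convex_Icc _ _
  -- Step A : the claim for interior points
  have A : ∀ p q : Fin N → ℝ, p ∈ interior (Set.Icc (0 : Fin N → ℝ) k) →
      q ∈ interior (Set.Icc (0 : Fin N → ℝ) k) → p ≤ q →
      β * p i + f p i ≤ β * q i + f q i := by
    intro p q hp hq hpq
    set γ : ℝ → (Fin N → ℝ) := fun t => p + t • (q - p) with hγdef
    have hmem : ∀ t ∈ Set.Icc (0 : ℝ) 1, γ t ∈ interior (Set.Icc (0 : Fin N → ℝ) k) := by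
      intro t ht
      have hrw : γ t = (1 - t) • p + t • q := by
        simp only [hγdef, smul_sub, sub_smul, one_smul]
        abel
      rw [hrw]
      exact hco.interior hp hq (by linarith [ht.2] : (0:ℝ) ≤ 1 - t) ht.1 (by ring)
    have hline : ∀ t : ℝ, HasDerivAt γ (q - p) t := by
      intro t
      simpa [hγdef] using ((hasDerivAt_id t).smul_const (q - p)).const_add p
    have hdiff : ∀ t ∈ Set.Icc (0 : ℝ) 1, DifferentiableAt ℝ f (γ t) := fun t ht =>
      (hf.contDiffAt (mem_interior_iff_mem_nhds.1 (hmem t ht))).differentiableAt one_ne_zero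
    set g : ℝ → ℝ := fun t => β * γ t i + f (γ t) i with hgdef
    have hg : ∀ t ∈ Set.Icc (0 : ℝ) 1, HasDerivAt g
        (β * (q - p) i + fderiv ℝ f (γ t) (q - p) i) t := by
      intro t ht
      have h1 : HasDerivAt (fun t => f (γ t)) (fderiv ℝ f (γ t) (q - p)) t :=
        ((hdiff t ht).hasFDerivAt.comp_hasDerivAt t (hline t))
      have h2 : HasDerivAt (fun t => f (γ t) i) (fderiv ℝ f (γ t) (q - p) i) t := by
        exact
          ((ContinuousLinearMap.proj i : (Fin N → ℝ) →L[ℝ] ℝ).hasFDerivAt).comp_hasDerivAt t h1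
      have h3 : HasDerivAt (fun t => γ t i) ((q - p) i) t := by
        exact
          ((ContinuousLinearMap.proj i : (Fin N → ℝ) →L[ℝ] ℝ).hasFDerivAt).comp_hasDerivAt t
            (hline t)
      exact (h3.const_mul β).add h2
    have hderiv_nonneg : ∀ t ∈ Set.Icc (0 : ℝ) 1,
        0 ≤ β * (q - p) i + fderiv ℝ f (γ t) (q - p) i := by
      intro t ht
      have hmemIcc : γ t ∈ Set.Icc (0 : Fin N → ℝ) k := interior_subset (hmem t ht)
      have hv : ∀ j, 0 ≤ (q - p) j := fun j => sub_nonneg.2 (hpq j)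
      have hrepr : (q - p) = ∑ j, (q - p) j • (Pi.single j (1 : ℝ) : Fin N → ℝ) := by
        funext a
        simp [Pi.single_apply, Finset.sum_apply]
      have hsum : fderiv ℝ f (γ t) (q - p) i
          = ∑ j, (q - p) j * fderiv ℝ f (γ t) (Pi.single j 1) i := by
        conv_lhs => rw [hrepr]
        rw [map_sum]
        simp [Finset.sum_apply]
      rw [hsum, ← Finset.add_sum_erase Finset.univ
        (fun j => (q - p) j * fderiv ℝ f (γ t) (Pi.single j 1) i) (Finset.mem_univ i)]
      have h1 : 0 ≤ ∑ j ∈ Finset.univ.erase i,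
          (q - p) j * fderiv ℝ f (γ t) (Pi.single j 1) i := by
        refine Finset.sum_nonneg fun j hj => mul_nonneg (hv j) ?_
        exact hcoop _ hmemIcc i j (fun h => (Finset.mem_erase.1 hj).1 h.symm)
      have h2 : -(β * (q - p) i) ≤ (q - p) i * fderiv ℝ f (γ t) (Pi.single i 1) i := by
        have habs := hβ _ hmemIcc i
        have : -β ≤ fderiv ℝ f (γ t) (Pi.single i 1) i := by
          have := neg_abs_le (fderiv ℝ f (γ t) (Pi.single i 1) i)
          linarith
        calc -(β * (q - p) i) = (q - p) i * (-β) := by ring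
          _ ≤ (q - p) i * fderiv ℝ f (γ t) (Pi.single i 1) i :=
            mul_le_mul_of_nonneg_left this (hv i)
      linarith
    have hcont : ContinuousOn g (Set.Icc 0 1) := fun t ht =>
      ((hg t ht).continuousAt).continuousWithinAt
    have hmono : MonotoneOn g (Set.Icc (0 : ℝ) 1) := by
      apply monotoneOn_of_deriv_nonneg (convex_Icc 0 1) hcont
      · intro t ht
        rw [interior_Icc] at ht
        exact ((hg t (Set.Ioo_subset_Icc_self ht)).differentiableAt).differentiableWithinAt
      · intro t ht
        rw [interior_Icc] at ht
        rw [(hg t (Set.Ioo_subset_Icc_self ht)).deriv]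
        exact hderiv_nonneg t (Set.Ioo_subset_Icc_self ht)
    have h01 := hmono (Set.left_mem_Icc.2 zero_le_one) (Set.right_mem_Icc.2 zero_le_one)
      zero_le_one
    have hγ0 : γ 0 = p := by simp [hγdef]
    have hγ1 : γ 1 = q := by simp [hγdef]
    simpa [hgdef, hγ0, hγ1] using h01
  -- Step B : pass to the closed box by approximation
  have hint : ∀ a : Fin N → ℝ, (∀ j, 0 < a j) → (∀ j, a j < k j) →
      a ∈ interior (Set.Icc (0 : Fin N → ℝ) k) := by
    intro a h1 h2
    rw [← Set.pi_univ_Icc, interior_pi_set Set.finite_univ]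
    intro j _
    simp only [interior_Icc, Set.mem_Ioo, Pi.zero_apply]
    exact ⟨h1 j, h2 j⟩
  set a : Fin N → ℝ := fun j => k j / 4 with hadef
  set b : Fin N → ℝ := fun j => k j / 2 with hbdef
  have ha_int : a ∈ interior (Set.Icc (0 : Fin N → ℝ) k) :=
    hint a (fun j => by simp only [hadef]; exact div_pos (hk j) (by norm_num)) (fun j => by have := hk j; simp only [hadef]; linarith)
  have hb_int : b ∈ interior (Set.Icc (0 : Fin N → ℝ) k) :=
    hint b (fun j => by simp only [hbdef]; exact div_pos (hk j) (by norm_num)) (fun j => by have := hk j; simp only [hbdef]; linarith)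
  set xt : ℝ → (Fin N → ℝ) := fun t => t • a + (1 - t) • x with hxtdef
  set yt : ℝ → (Fin N → ℝ) := fun t => t • b + (1 - t) • y with hytdef
  have hxt_int : ∀ t ∈ Set.Ioc (0 : ℝ) 1, xt t ∈ interior (Set.Icc (0 : Fin N → ℝ) k) :=
    fun t ht => hco.combo_interior_self_mem_interior ha_int hx ht.1
      (by linarith [ht.2]) (by ring)
  have hyt_int : ∀ t ∈ Set.Ioc (0 : ℝ) 1, yt t ∈ interior (Set.Icc (0 : Fin N → ℝ) k) :=
    fun t ht => hco.combo_interior_self_mem_interior hb_int hy ht.1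
      (by linarith [ht.2]) (by ring)
  have hle : ∀ t ∈ Set.Ioc (0 : ℝ) 1, xt t ≤ yt t := by
    intro t ht j
    have h1 : a j ≤ b j := by
      have := hk j; simp only [hadef, hbdef]; linarith
    simp only [hxtdef, hytdef, Pi.add_apply, Pi.smul_apply, smul_eq_mul]
    have h2 : x j ≤ y j := hxy j
    nlinarith [ht.1.le, ht.2]
  have hAt : ∀ t ∈ Set.Ioc (0 : ℝ) 1,
      β * xt t i + f (xt t) i ≤ β * yt t i + f (yt t) i :=
    fun t ht => A _ _ (hxt_int t ht) (hyt_int t ht) (hle t ht)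
  -- take the limit t → 0⁺
  haveI hne : (nhdsWithin (0:ℝ) (Set.Ioc (0:ℝ) 1)).NeBot := by
    refine mem_closure_iff_nhdsWithin_neBot.1 ?_
    rw [closure_Ioc (zero_ne_one)]
    exact Set.left_mem_Icc.2 zero_le_one
  have hLx : Filter.Tendsto xt (nhdsWithin (0:ℝ) (Set.Ioc (0:ℝ) 1))
      (nhdsWithin x (Set.Icc (0 : Fin N → ℝ) k)) := by
    have hc : Continuous xt := by
      exact (continuous_id.smul continuous_const).add
        ((continuous_const.sub continuous_id).smul continuous_const)
    have h0 : xt 0 = x := by simp [hxtdef]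
    have ht : Filter.Tendsto xt (nhdsWithin (0:ℝ) (Set.Ioc (0:ℝ) 1)) (nhds x) := by
      rw [← h0]
      exact (hc.tendsto 0).mono_left nhdsWithin_le_nhds
    refine tendsto_nhdsWithin_of_tendsto_nhds_of_eventually_within _ ht ?_
    exact eventually_mem_nhdsWithin.mono fun t ht => interior_subset (hxt_int t ht)
  have hLy : Filter.Tendsto yt (nhdsWithin (0:ℝ) (Set.Ioc (0:ℝ) 1))
      (nhdsWithin y (Set.Icc (0 : Fin N → ℝ) k)) := by
    have hc : Continuous yt := by
      exact (continuous_id.smul continuous_const).add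
        ((continuous_const.sub continuous_id).smul continuous_const)
    have h0 : yt 0 = y := by simp [hytdef]
    have ht : Filter.Tendsto yt (nhdsWithin (0:ℝ) (Set.Ioc (0:ℝ) 1)) (nhds y) := by
      rw [← h0]
      exact (hc.tendsto 0).mono_left nhdsWithin_le_nhds
    refine tendsto_nhdsWithin_of_tendsto_nhds_of_eventually_within _ ht ?_
    exact eventually_mem_nhdsWithin.mono fun t ht => interior_subset (hyt_int t ht)
  have hH : ∀ z : Fin N → ℝ, z ∈ Set.Icc (0 : Fin N → ℝ) k →
      Filter.Tendsto (fun w : Fin N → ℝ => β * w i + f w i)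
      (nhdsWithin z (Set.Icc (0 : Fin N → ℝ) k)) (nhds (β * z i + f z i)) := by
    intro z hz
    have hcf : ContinuousWithinAt (fun w : Fin N → ℝ => β * w i + f w i)
        (Set.Icc (0 : Fin N → ℝ) k) z := by
      apply ContinuousWithinAt.add
      · exact ((continuous_const.mul (continuous_apply i)).continuousWithinAt)
      · exact ((continuous_apply i).continuousAt.comp_continuousWithinAt
          (hf.continuousOn z hz))
    exact hcf
  have hTx : Filter.Tendsto (fun t => β * xt t i + f (xt t) i)
      (nhdsWithin (0:ℝ) (Set.Ioc (0:ℝ) 1)) (nhds (β * x i + f x i)) :=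
    (hH x hx).comp hLx
  have hTy : Filter.Tendsto (fun t => β * yt t i + f (yt t) i)
      (nhdsWithin (0:ℝ) (Set.Ioc (0:ℝ) 1)) (nhds (β * y i + f y i)) :=
    (hH y hy).comp hLy
  exact le_of_tendsto_of_tendsto hTx hTy
    (eventually_mem_nhdsWithin.mono fun t ht => hAt t ht)

/-- integrability of the two integrands of `Tint`. -/
lemma integ_aux {N : ℕ} {k : Fin N → ℝ} {β : ℝ}
    {f : (Fin N → ℝ) → (Fin N → ℝ)} (hf : ContinuousOn f (Set.Icc 0 k))
    {u : ℝ → (Fin N → ℝ)} (hu : Continuous u)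
    (hval : ∀ ξ, u ξ ∈ Set.Icc (0 : Fin N → ℝ) k) (i : Fin N)
    {a : ℝ} (ha : 0 < a) (ξ : ℝ) :
    IntegrableOn (fun s => Real.exp (-a * (ξ - s)) * (β * u s i + f (u s) i)) (Set.Iic ξ) ∧
    IntegrableOn (fun s => Real.exp (a * (ξ - s)) * (β * u s i + f (u s) i)) (Set.Ici ξ) := by
  obtain ⟨M, hM⟩ := (isCompact_Icc (a := (0 : Fin N → ℝ)) (b := k)).exists_bound_of_continuousOn
    ((continuous_const.mul (continuous_apply i)).continuousOn.add
      ((continuous_apply i).comp_continuousOn hf))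
  have hMnn : 0 ≤ M := le_trans (norm_nonneg _) (hM (u 0) (hval 0))
  have hgc : Continuous fun s => β * u s i + f (u s) i := by
    apply Continuous.add
    · exact continuous_const.mul ((continuous_apply i).comp hu)
    · exact (continuous_apply i).comp (hf.comp_continuous hu hval)
  have hgb : ∀ s, |β * u s i + f (u s) i| ≤ M := fun s => hM (u s) (hval s)
  constructor
  · have hint : Integrable ((fun s => M * Real.exp (-a * ξ) * Real.exp (a * s)))
        (volume.restrict (Set.Iic ξ)) := (expIic_aux ha ξ).const_mul _
    refine Integrable.mono' hint ?_ (Filter.Eventually.of_forall fun s => ?_)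
    · exact ((Real.continuous_exp.comp (by continuity)).mul hgc).aestronglyMeasurable
    · have h1 : Real.exp (-a * (ξ - s)) = Real.exp (-a * ξ) * Real.exp (a * s) := by
        rw [← Real.exp_add]; ring_nf
      rw [Real.norm_eq_abs, abs_mul, abs_of_pos (Real.exp_pos _), h1]
      calc Real.exp (-a * ξ) * Real.exp (a * s) * |β * u s i + f (u s) i|
          ≤ Real.exp (-a * ξ) * Real.exp (a * s) * M := by
            exact mul_le_mul_of_nonneg_left (hgb s) (by positivity)
        _ = M * Real.exp (-a * ξ) * Real.exp (a * s) := by ring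
  · have hint : Integrable ((fun s => M * Real.exp (a * ξ) * Real.exp (-(a * s))))
        (volume.restrict (Set.Ici ξ)) := (expIci_aux ha ξ).const_mul _
    refine Integrable.mono' hint ?_ (Filter.Eventually.of_forall fun s => ?_)
    · exact ((Real.continuous_exp.comp (by continuity)).mul hgc).aestronglyMeasurable
    · have h1 : Real.exp (a * (ξ - s)) = Real.exp (a * ξ) * Real.exp (-(a * s)) := by
        rw [← Real.exp_add]; ring_nf
      rw [Real.norm_eq_abs, abs_mul, abs_of_pos (Real.exp_pos _), h1]
      calc Real.exp (a * ξ) * Real.exp (-(a * s)) * |β * u s i + f (u s) i|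
          ≤ Real.exp (a * ξ) * Real.exp (-(a * s)) * M := by
            exact mul_le_mul_of_nonneg_left (hgb s) (by positivity)
        _ = M * Real.exp (a * ξ) * Real.exp (-(a * s)) := by ring

end Aux

/-- The integral operator `T` of (4.13): componentwise,
`T_i[u](ξ) = (1/(d_i(λ₁ᵢ+λ₂ᵢ))) (∫_{-∞}^{ξ} e^{-λ₁ᵢ(ξ-s)} (βuᵢ(s)+fᵢ(u(s))) ds
             + ∫_{ξ}^{∞} e^{λ₂ᵢ(ξ-s)} (βuᵢ(s)+fᵢ(u(s))) ds)`,
where `-λ₁ᵢ, λ₂ᵢ` are the roots of `dᵢλ² - cλ - β = 0`. -/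
noncomputable def Tint {N : ℕ} (d : Fin N → ℝ) (β c : ℝ)
    (f : (Fin N → ℝ) → (Fin N → ℝ)) (u : ℝ → (Fin N → ℝ)) (i : Fin N) (ξ : ℝ) : ℝ :=
  let l₁ : ℝ := (-c + Real.sqrt (c ^ 2 + 4 * β * d i)) / (2 * d i)
  let l₂ : ℝ := (c + Real.sqrt (c ^ 2 + 4 * β * d i)) / (2 * d i)
  (1 / (d i * (l₁ + l₂))) *
    ((∫ s in Set.Iic ξ, Real.exp (-l₁ * (ξ - s)) * (β * u s i + f (u s) i)) +
     (∫ s in Set.Ici ξ, Real.exp (l₂ * (ξ - s)) * (β * u s i + f (u s) i)))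

theorem stmt_16 (N : ℕ) (hN : 1 ≤ N) (d : Fin N → ℝ) (hd : ∀ i, 0 < d i)
    (c β : ℝ) (hc : 0 < c)
    (k : Fin N → ℝ) (hk : ∀ i, 0 < k i)
    (f : (Fin N → ℝ) → (Fin N → ℝ)) (hf : ContDiffOn ℝ 1 f (Set.Icc 0 k))
    (hcoop : ∀ u ∈ Set.Icc (0 : Fin N → ℝ) k, ∀ i j, i ≠ j →
      0 ≤ fderiv ℝ f u (Pi.single j 1) i)
    (hβ : ∀ u ∈ Set.Icc (0 : Fin N → ℝ) k, ∀ i,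
      |fderiv ℝ f u (Pi.single i 1) i| < β) :
    (∀ u v : ℝ → (Fin N → ℝ), Continuous u → Continuous v →
      (∀ ξ, u ξ ∈ Set.Icc (0 : Fin N → ℝ) k) →
      (∀ ξ, v ξ ∈ Set.Icc (0 : Fin N → ℝ) k) →
      (∀ ξ i, v ξ i ≤ u ξ i) →
      ∀ i ξ, Tint d β c f v i ξ ≤ Tint d β c f u i ξ) ∧
    (∀ u : ℝ → (Fin N → ℝ), Continuous u →
      (∀ ξ, u ξ ∈ Set.Icc (0 : Fin N → ℝ) k) →
      (∀ i, Monotone fun ξ => u ξ i) →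
      ∀ i, Monotone fun ξ => Tint d β c f u i ξ) := by
  have h0k : (0 : Fin N → ℝ) ∈ Set.Icc (0 : Fin N → ℝ) k :=
    ⟨le_refl _, fun j => (hk j).le⟩
  have hβ0 : 0 < β := lt_of_le_of_lt (abs_nonneg _) (hβ 0 h0k ⟨0, hN⟩)
  have hfc : ContinuousOn f (Set.Icc 0 k) := hf.continuousOn
  -- roots positivity
  have hl₁ : ∀ i : Fin N, 0 < (-c + Real.sqrt (c ^ 2 + 4 * β * d i)) / (2 * d i) := by
    intro i
    have h1 : c < Real.sqrt (c ^ 2 + 4 * β * d i) := by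
      rw [Real.lt_sqrt hc.le]
      have := hd i
      nlinarith
    have := hd i
    apply div_pos (by linarith) (by linarith)
  have hl₂ : ∀ i : Fin N, 0 < (c + Real.sqrt (c ^ 2 + 4 * β * d i)) / (2 * d i) := by
    intro i
    have h1 : 0 < Real.sqrt (c ^ 2 + 4 * β * d i) := by
      apply Real.sqrt_pos.2
      have := hd i
      nlinarith
    have := hd i
    apply div_pos (by linarith) (by linarith)
  have hC : ∀ i : Fin N, 0 < 1 / (d i * ((-c + Real.sqrt (c ^ 2 + 4 * β * d i)) / (2 * d i) +
      (c + Real.sqrt (c ^ 2 + 4 * β * d i)) / (2 * d i))) := by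
    intro i
    have := hd i
    have := hl₁ i
    have := hl₂ i
    positivity
  constructor
  · -- part (a): monotone in u
    intro u v hu hv huval hvval hvu i ξ
    have hkey : ∀ s : ℝ,
        β * v s i + f (v s) i ≤ β * u s i + f (u s) i := by
      intro s
      exact key_mono hk hf hcoop hβ i (hvval s) (huval s) (fun j => hvu s j)
    show Tint d β c f v i ξ ≤ Tint d β c f u i ξ
    unfold Tint
    simp only
    set l₁ : ℝ := (-c + Real.sqrt (c ^ 2 + 4 * β * d i)) / (2 * d i) with hl1def
    set l₂ : ℝ := (c + Real.sqrt (c ^ 2 + 4 * β * d i)) / (2 * d i) with hl2def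
    apply mul_le_mul_of_nonneg_left _ (hC i).le
    apply add_le_add
    · apply setIntegral_mono_on ((integ_aux hfc hv hvval i (hl₁ i) ξ).1)
        ((integ_aux hfc hu huval i (hl₁ i) ξ).1) measurableSet_Iic
      intro s _
      exact mul_le_mul_of_nonneg_left (hkey s) (Real.exp_pos _).le
    · apply setIntegral_mono_on ((integ_aux hfc hv hvval i (hl₂ i) ξ).2)
        ((integ_aux hfc hu huval i (hl₂ i) ξ).2) measurableSet_Ici
      intro s _
      exact mul_le_mul_of_nonneg_left (hkey s) (Real.exp_pos _).le
  · -- part (b): preserves monotonicity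
    intro u hu huval humono i
    intro ξ₁ ξ₂ hξ
    set δ : ℝ := ξ₂ - ξ₁ with hδdef
    have hδ0 : 0 ≤ δ := by simp [hδdef]; linarith
    -- the shifted function
    set u' : ℝ → (Fin N → ℝ) := fun s => u (s + δ) with hu'def
    have hu' : Continuous u' := hu.comp (continuous_id.add continuous_const)
    have hu'val : ∀ s, u' s ∈ Set.Icc (0 : Fin N → ℝ) k := fun s => huval (s + δ)
    have hkey : ∀ s : ℝ,
        β * u s i + f (u s) i ≤ β * u' s i + f (u' s) i := by
      intro s
      refine key_mono hk hf hcoop hβ i (huval s) (hu'val s) (fun j => ?_)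
      exact humono j (by linarith : s ≤ s + δ)
    show Tint d β c f u i ξ₁ ≤ Tint d β c f u i ξ₂
    unfold Tint
    simp only
    set l₁ : ℝ := (-c + Real.sqrt (c ^ 2 + 4 * β * d i)) / (2 * d i) with hl1def
    set l₂ : ℝ := (c + Real.sqrt (c ^ 2 + 4 * β * d i)) / (2 * d i) with hl2def
    apply mul_le_mul_of_nonneg_left _ (hC i).le
    have e1 : (∫ s in Set.Iic ξ₂, Real.exp (-l₁ * (ξ₂ - s)) * (β * u s i + f (u s) i))
        = ∫ s in Set.Iic ξ₁, Real.exp (-l₁ * (ξ₁ - s)) * (β * u' s i + f (u' s) i) := by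
      rw [shiftIic _ δ ξ₂]
      have hξδ : ξ₂ - δ = ξ₁ := by simp [hδdef]
      rw [hξδ]
      apply setIntegral_congr_fun measurableSet_Iic
      intro s _
      have : ξ₂ - (s + δ) = ξ₁ - s := by simp [hδdef]; ring
      simp only [hu'def, this]
    have e2 : (∫ s in Set.Ici ξ₂, Real.exp (l₂ * (ξ₂ - s)) * (β * u s i + f (u s) i))
        = ∫ s in Set.Ici ξ₁, Real.exp (l₂ * (ξ₁ - s)) * (β * u' s i + f (u' s) i) := by
      rw [shiftIci _ δ ξ₂]
      have hξδ : ξ₂ - δ = ξ₁ := by simp [hδdef]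
      rw [hξδ]
      apply setIntegral_congr_fun measurableSet_Ici
      intro s _
      have : ξ₂ - (s + δ) = ξ₁ - s := by simp [hδdef]; ring
      simp only [hu'def, this]
    rw [e1, e2]
    apply add_le_add
    · apply setIntegral_mono_on ((integ_aux hfc hu huval i (hl₁ i) ξ₁).1)
        ((integ_aux hfc hu' hu'val i (hl₁ i) ξ₁).1) measurableSet_Iic
      intro s _
      exact mul_le_mul_of_nonneg_left (hkey s) (Real.exp_pos _).le
    · apply setIntegral_mono_on ((integ_aux hfc hu huval i (hl₂ i) ξ₁).2)
        ((integ_aux hfc hu' hu'val i (hl₂ i) ξ₁).2) measurableSet_Ici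
      intro s _
      exact mul_le_mul_of_nonneg_left (hkey s) (Real.exp_pos _).le
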